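/- Let 0<α<1 and r₀>0, and define f(s₁,s₂) = s₂·((s₁²+s₂²)/r₀)^α on ℝ²∖{0}. Then for every point (s₁,s₂) with 0 < s₁²+s₂² ≤ r₀/2 and every i,j ∈ {1,2}, the second-order partial derivative satisfies |∂²f/∂sᵢ∂sⱼ (s₁,s₂)| ≤ (6α/r₀^α)·(s₁²+s₂²)^{α−1/2}. -/

import Mathlib

/-- Partial derivative of a two-variable real function in the first variable. -/
noncomputable def pderiv1 (g : ℝ → ℝ → ℝ) (x y : ℝ) : ℝ := deriv (fun x' => g x' y) x

/-- Partial derivative of a two-variable real function in the second variable. -/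
noncomputable def pderiv2 (g : ℝ → ℝ → ℝ) (x y : ℝ) : ℝ := deriv (fun y' => g x y') y


open Real Filter

private lemma hU1 (y x : ℝ) : HasDerivAt (fun x' : ℝ => x' ^ 2 + y ^ 2) (2 * x) x := by
  simpa using (hasDerivAt_pow 2 x).add_const (y ^ 2)

private lemma hU2 (x y : ℝ) : HasDerivAt (fun y' : ℝ => x ^ 2 + y' ^ 2) (2 * y) y := by
  simpa using (hasDerivAt_pow 2 y).const_add (x ^ 2)

private lemma hR1 (p : ℝ) {x y : ℝ} (h : x ^ 2 + y ^ 2 ≠ 0) :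
    HasDerivAt (fun x' : ℝ => (x' ^ 2 + y ^ 2) ^ p)
      (p * (x ^ 2 + y ^ 2) ^ (p - 1) * (2 * x)) x := by
  simpa [Function.comp_def] using
    (Real.hasDerivAt_rpow_const (p := p) (Or.inl h)).comp x (hU1 y x)

private lemma hR2 (p : ℝ) {x y : ℝ} (h : x ^ 2 + y ^ 2 ≠ 0) :
    HasDerivAt (fun y' : ℝ => (x ^ 2 + y' ^ 2) ^ p)
      (p * (x ^ 2 + y ^ 2) ^ (p - 1) * (2 * y)) y := by
  simpa [Function.comp_def] using
    (Real.hasDerivAt_rpow_const (p := p) (Or.inl h)).comp y (hU2 x y)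

private lemma F_eq (α r₀ : ℝ) (hr₀ : 0 < r₀) (f : ℝ → ℝ → ℝ)
    (hf : ∀ x y : ℝ, f x y = y * ((x ^ 2 + y ^ 2) / r₀) ^ α) (x y : ℝ) :
    f x y = y * (x ^ 2 + y ^ 2) ^ α / r₀ ^ α := by
  rw [hf, Real.div_rpow (by positivity) hr₀.le, mul_div_assoc]

private lemma P1 (α r₀ : ℝ) (hr₀ : 0 < r₀) (f : ℝ → ℝ → ℝ)
    (hf : ∀ x y : ℝ, f x y = y * ((x ^ 2 + y ^ 2) / r₀) ^ α)
    (x y : ℝ) (h : x ^ 2 + y ^ 2 ≠ 0) :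
    HasDerivAt (fun x' => f x' y)
      (2 * α * y * (x * (x ^ 2 + y ^ 2) ^ (α - 1)) / r₀ ^ α) x := by
  have hfe : (fun x' => f x' y) = (fun x' => y * (x' ^ 2 + y ^ 2) ^ α / r₀ ^ α) :=
    funext fun x' => F_eq α r₀ hr₀ f hf x' y
  rw [hfe]
  have := ((hR1 α h).const_mul y).div_const (r₀ ^ α)
  refine this.congr_deriv ?_
  ring

private lemma P2 (α r₀ : ℝ) (hr₀ : 0 < r₀) (f : ℝ → ℝ → ℝ)
    (hf : ∀ x y : ℝ, f x y = y * ((x ^ 2 + y ^ 2) / r₀) ^ α)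
    (x y : ℝ) (h : x ^ 2 + y ^ 2 ≠ 0) :
    HasDerivAt (fun y' => f x y')
      (((x ^ 2 + y ^ 2) ^ α + 2 * α * (y ^ 2 * (x ^ 2 + y ^ 2) ^ (α - 1))) / r₀ ^ α) y := by
  have hfe : (fun y' => f x y') = (fun y' => y' * (x ^ 2 + y' ^ 2) ^ α / r₀ ^ α) :=
    funext fun y' => F_eq α r₀ hr₀ f hf x y'
  rw [hfe]
  have := ((hasDerivAt_id y).mul (hR2 α h)).div_const (r₀ ^ α)
  refine this.congr_deriv ?_
  simp only [id_eq]
  ring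

private lemma bound_aux (α c A u s v w : ℝ) (hα : 0 < α) (hc : 0 < c) (hA : 0 ≤ A)
    (hs : 0 ≤ s) (hv : |v| ≤ s) (hw : |w| ≤ 3 * u) :
    |2 * α * A * (v * w) / c| ≤ 6 * α / c * (A * u * s) := by
  have hu : 0 ≤ u := by nlinarith [abs_nonneg w]
  calc |2 * α * A * (v * w) / c| = 2 * α * A * (|v| * |w|) / c := by
        simp only [abs_div, abs_mul, abs_two, abs_of_pos hc, abs_of_pos hα, abs_of_nonneg hA]
    _ ≤ 2 * α * A * (s * (3 * u)) / c := by gcongr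
    _ = 6 * α / c * (A * u * s) := by ring

/-- Lemma 5.1 (Lemma `var-eq1`) of "Thermodynamics of the Katok Map":
for `f(s₁,s₂) = s₂ ((s₁²+s₂²)/r₀)^α`, all second-order partial derivatives of `f`
at a point with `0 < s₁²+s₂² ≤ r₀/2` are bounded by `(6α/r₀^α) (s₁²+s₂²)^(α-1/2)`. -/
theorem second_partials_bound (α r₀ : ℝ) (hα : 0 < α) (hα1 : α < 1) (hr₀ : 0 < r₀)
    (f : ℝ → ℝ → ℝ)
    (hf : ∀ x y : ℝ, f x y = y * ((x ^ 2 + y ^ 2) / r₀) ^ α)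
    (s₁ s₂ : ℝ) (hpos : 0 < s₁ ^ 2 + s₂ ^ 2) (hle : s₁ ^ 2 + s₂ ^ 2 ≤ r₀ / 2) :
    |pderiv1 (pderiv1 f) s₁ s₂| ≤ 6 * α / r₀ ^ α * (s₁ ^ 2 + s₂ ^ 2) ^ (α - 1 / 2) ∧
    |pderiv1 (pderiv2 f) s₁ s₂| ≤ 6 * α / r₀ ^ α * (s₁ ^ 2 + s₂ ^ 2) ^ (α - 1 / 2) ∧
    |pderiv2 (pderiv1 f) s₁ s₂| ≤ 6 * α / r₀ ^ α * (s₁ ^ 2 + s₂ ^ 2) ^ (α - 1 / 2) ∧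
    |pderiv2 (pderiv2 f) s₁ s₂| ≤ 6 * α / r₀ ^ α * (s₁ ^ 2 + s₂ ^ 2) ^ (α - 1 / 2) := by
  have hne : s₁ ^ 2 + s₂ ^ 2 ≠ 0 := hpos.ne'
  have hc : 0 < r₀ ^ α := Real.rpow_pos_of_pos hr₀ α
  have hA : 0 < (s₁ ^ 2 + s₂ ^ 2) ^ (α - 2) := Real.rpow_pos_of_pos hpos _
  have hB : (s₁ ^ 2 + s₂ ^ 2) ^ (α - 1)
      = (s₁ ^ 2 + s₂ ^ 2) ^ (α - 2) * (s₁ ^ 2 + s₂ ^ 2) := by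
    rw [show α - 1 = (α - 2) + 1 by ring, Real.rpow_add hpos, Real.rpow_one]
  have hS : (s₁ ^ 2 + s₂ ^ 2) ^ (α - 1 / 2)
      = (s₁ ^ 2 + s₂ ^ 2) ^ (α - 2) * (s₁ ^ 2 + s₂ ^ 2) * Real.sqrt (s₁ ^ 2 + s₂ ^ 2) := by
    rw [show α - 1 / 2 = ((α - 2) + 1) + (1 / 2 : ℝ) by ring, Real.rpow_add hpos,
      Real.rpow_add hpos, Real.rpow_one, Real.sqrt_eq_rpow]
  have hs : 0 ≤ Real.sqrt (s₁ ^ 2 + s₂ ^ 2) := Real.sqrt_nonneg _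
  have hv1 : |s₁| ≤ Real.sqrt (s₁ ^ 2 + s₂ ^ 2) := by
    rw [← Real.sqrt_sq_eq_abs]; exact Real.sqrt_le_sqrt (by nlinarith)
  have hv2 : |s₂| ≤ Real.sqrt (s₁ ^ 2 + s₂ ^ 2) := by
    rw [← Real.sqrt_sq_eq_abs]; exact Real.sqrt_le_sqrt (by nlinarith)
  have hw1 : |s₁ ^ 2 + s₂ ^ 2 + 2 * (α - 1) * s₁ ^ 2| ≤ 3 * (s₁ ^ 2 + s₂ ^ 2) :=
    abs_le.mpr ⟨by nlinarith [sq_nonneg s₁, sq_nonneg s₂], by nlinarith [sq_nonneg s₁, sq_nonneg s₂]⟩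
  have hw2 : |s₁ ^ 2 + s₂ ^ 2 + 2 * (α - 1) * s₂ ^ 2| ≤ 3 * (s₁ ^ 2 + s₂ ^ 2) :=
    abs_le.mpr ⟨by nlinarith [sq_nonneg s₁, sq_nonneg s₂], by nlinarith [sq_nonneg s₁, sq_nonneg s₂]⟩
  have hw3 : |3 * (s₁ ^ 2 + s₂ ^ 2) + 2 * (α - 1) * s₂ ^ 2| ≤ 3 * (s₁ ^ 2 + s₂ ^ 2) :=
    abs_le.mpr ⟨by nlinarith [sq_nonneg s₁, sq_nonneg s₂], by nlinarith [sq_nonneg s₁, sq_nonneg s₂]⟩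
  have hev1 : ∀ᶠ x' in nhds s₁, x' ^ 2 + s₂ ^ 2 ≠ 0 := by
    have hcont : ContinuousAt (fun x' : ℝ => x' ^ 2 + s₂ ^ 2) s₁ := by fun_prop
    exact hcont.eventually_ne hne
  have hev2 : ∀ᶠ y' in nhds s₂, s₁ ^ 2 + y' ^ 2 ≠ 0 := by
    have hcont : ContinuousAt (fun y' : ℝ => s₁ ^ 2 + y' ^ 2) s₂ := by fun_prop
    exact hcont.eventually_ne hne
  refine ⟨?_, ?_, ?_, ?_⟩
  · -- ∂₁∂₁
    have e1 : (fun x' => pderiv1 f x' s₂) =ᶠ[nhds s₁]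
        (fun x' => 2 * α * s₂ * (x' * (x' ^ 2 + s₂ ^ 2) ^ (α - 1)) / r₀ ^ α) :=
      hev1.mono fun x' h => (P1 α r₀ hr₀ f hf x' s₂ h).deriv
    have hG := (((hasDerivAt_id s₁).mul (hR1 (α - 1) hne)).const_mul
      (2 * α * s₂)).div_const (r₀ ^ α)
    simp only [id_eq] at hG
    rw [show α - 1 - 1 = α - 2 by ring] at hG
    have D : pderiv1 (pderiv1 f) s₁ s₂
        = 2 * α * s₂ * (1 * (s₁ ^ 2 + s₂ ^ 2) ^ (α - 1)
            + s₁ * ((α - 1) * (s₁ ^ 2 + s₂ ^ 2) ^ (α - 2) * (2 * s₁))) / r₀ ^ α := by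
      show deriv (fun x' => pderiv1 f x' s₂) s₁ = _
      rw [e1.deriv_eq]; exact hG.deriv
    rw [D, hS, hB]
    have hrw : 2 * α * s₂ * (1 * ((s₁ ^ 2 + s₂ ^ 2) ^ (α - 2) * (s₁ ^ 2 + s₂ ^ 2))
          + s₁ * ((α - 1) * (s₁ ^ 2 + s₂ ^ 2) ^ (α - 2) * (2 * s₁))) / r₀ ^ α
        = 2 * α * ((s₁ ^ 2 + s₂ ^ 2) ^ (α - 2))
          * (s₂ * (s₁ ^ 2 + s₂ ^ 2 + 2 * (α - 1) * s₁ ^ 2)) / r₀ ^ α := by ring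
    rw [hrw]
    exact bound_aux α (r₀ ^ α) _ _ _ _ _ hα hc hA.le hs hv2 hw1
  · -- ∂₁∂₂ : pderiv1 (pderiv2 f)
    have e1 : (fun x' => pderiv2 f x' s₂) =ᶠ[nhds s₁]
        (fun x' => ((x' ^ 2 + s₂ ^ 2) ^ α
          + 2 * α * (s₂ ^ 2 * (x' ^ 2 + s₂ ^ 2) ^ (α - 1))) / r₀ ^ α) :=
      hev1.mono fun x' h => (P2 α r₀ hr₀ f hf x' s₂ h).deriv
    have hG := ((hR1 α hne).add (((hR1 (α - 1) hne).const_mul (s₂ ^ 2)).const_mul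
      (2 * α))).div_const (r₀ ^ α)
    rw [show α - 1 - 1 = α - 2 by ring] at hG
    have D : pderiv1 (pderiv2 f) s₁ s₂
        = (α * (s₁ ^ 2 + s₂ ^ 2) ^ (α - 1) * (2 * s₁)
            + 2 * α * (s₂ ^ 2 * ((α - 1) * (s₁ ^ 2 + s₂ ^ 2) ^ (α - 2) * (2 * s₁)))) / r₀ ^ α := by
      show deriv (fun x' => pderiv2 f x' s₂) s₁ = _
      rw [e1.deriv_eq]; exact hG.deriv
    rw [D, hS, hB]
    have hrw : (α * ((s₁ ^ 2 + s₂ ^ 2) ^ (α - 2) * (s₁ ^ 2 + s₂ ^ 2)) * (2 * s₁)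
          + 2 * α * (s₂ ^ 2 * ((α - 1) * (s₁ ^ 2 + s₂ ^ 2) ^ (α - 2) * (2 * s₁)))) / r₀ ^ α
        = 2 * α * ((s₁ ^ 2 + s₂ ^ 2) ^ (α - 2))
          * (s₁ * (s₁ ^ 2 + s₂ ^ 2 + 2 * (α - 1) * s₂ ^ 2)) / r₀ ^ α := by ring
    rw [hrw]
    exact bound_aux α (r₀ ^ α) _ _ _ _ _ hα hc hA.le hs hv1 hw2
  · -- ∂₂∂₁ : pderiv2 (pderiv1 f)
    have e2 : (fun y' => pderiv1 f s₁ y') =ᶠ[nhds s₂]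
        (fun y' => 2 * α * y' * (s₁ * (s₁ ^ 2 + y' ^ 2) ^ (α - 1)) / r₀ ^ α) :=
      hev2.mono fun y' h => (P1 α r₀ hr₀ f hf s₁ y' h).deriv
    have hG := ((((hasDerivAt_id s₂).const_mul (2 * α)).mul
      ((hR2 (α - 1) hne).const_mul s₁))).div_const (r₀ ^ α)
    simp only [id_eq] at hG
    rw [show α - 1 - 1 = α - 2 by ring] at hG
    have D : pderiv2 (pderiv1 f) s₁ s₂
        = (2 * α * 1 * (s₁ * (s₁ ^ 2 + s₂ ^ 2) ^ (α - 1))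
            + 2 * α * s₂ * (s₁ * ((α - 1) * (s₁ ^ 2 + s₂ ^ 2) ^ (α - 2) * (2 * s₂)))) / r₀ ^ α := by
      show deriv (fun y' => pderiv1 f s₁ y') s₂ = _
      rw [e2.deriv_eq]; exact hG.deriv
    rw [D, hS, hB]
    have hrw : (2 * α * 1 * (s₁ * ((s₁ ^ 2 + s₂ ^ 2) ^ (α - 2) * (s₁ ^ 2 + s₂ ^ 2)))
          + 2 * α * s₂ * (s₁ * ((α - 1) * (s₁ ^ 2 + s₂ ^ 2) ^ (α - 2) * (2 * s₂)))) / r₀ ^ α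
        = 2 * α * ((s₁ ^ 2 + s₂ ^ 2) ^ (α - 2))
          * (s₁ * (s₁ ^ 2 + s₂ ^ 2 + 2 * (α - 1) * s₂ ^ 2)) / r₀ ^ α := by ring
    rw [hrw]
    exact bound_aux α (r₀ ^ α) _ _ _ _ _ hα hc hA.le hs hv1 hw2
  · -- ∂₂∂₂
    have e2 : (fun y' => pderiv2 f s₁ y') =ᶠ[nhds s₂]
        (fun y' => ((s₁ ^ 2 + y' ^ 2) ^ α
          + 2 * α * (y' ^ 2 * (s₁ ^ 2 + y' ^ 2) ^ (α - 1))) / r₀ ^ α) :=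
      hev2.mono fun y' h => (P2 α r₀ hr₀ f hf s₁ y' h).deriv
    have hp : HasDerivAt (fun y : ℝ => y ^ 2) (2 * s₂) s₂ := by
      simpa using hasDerivAt_pow 2 s₂
    have hG := ((hR2 α hne).add ((hp.mul
      (hR2 (α - 1) hne)).const_mul (2 * α))).div_const (r₀ ^ α)
    rw [show α - 1 - 1 = α - 2 by ring] at hG
    have D : pderiv2 (pderiv2 f) s₁ s₂
        = (α * (s₁ ^ 2 + s₂ ^ 2) ^ (α - 1) * (2 * s₂)
            + 2 * α * (2 * s₂ * (s₁ ^ 2 + s₂ ^ 2) ^ (α - 1)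
              + s₂ ^ 2 * ((α - 1) * (s₁ ^ 2 + s₂ ^ 2) ^ (α - 2) * (2 * s₂)))) / r₀ ^ α := by
      show deriv (fun y' => pderiv2 f s₁ y') s₂ = _
      rw [e2.deriv_eq]; exact hG.deriv
    rw [D, hS, hB]
    have hrw : (α * ((s₁ ^ 2 + s₂ ^ 2) ^ (α - 2) * (s₁ ^ 2 + s₂ ^ 2)) * (2 * s₂)
          + 2 * α * (2 * s₂ * ((s₁ ^ 2 + s₂ ^ 2) ^ (α - 2) * (s₁ ^ 2 + s₂ ^ 2))
            + s₂ ^ 2 * ((α - 1) * (s₁ ^ 2 + s₂ ^ 2) ^ (α - 2) * (2 * s₂)))) / r₀ ^ α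
        = 2 * α * ((s₁ ^ 2 + s₂ ^ 2) ^ (α - 2))
          * (s₂ * (3 * (s₁ ^ 2 + s₂ ^ 2) + 2 * (α - 1) * s₂ ^ 2)) / r₀ ^ α := by ring
    rw [hrw]
    exact bound_aux α (r₀ ^ α) _ _ _ _ _ hα hc hA.le hs hv2 hw3
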